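/- Let M ⊆ 𝔽₂ⁿ \ {0} be a finite set with rank r, and let c ≥ 2 be an integer. If M contains no circuit of size larger than c, then |M| ≤ ∑_{i=1}^{c-1} binom(r, i). -/

import Mathlib

open Finset

/-- A circuit: a minimal nonempty subset of the ambient group minus `{0}` with zero sum. -/
def IsCircuit {V : Type*} [AddCommGroup V] [DecidableEq V] (C : Finset V) : Prop :=
  C.Nonempty ∧ (0 : V) ∉ C ∧ ∑ x ∈ C, x = 0 ∧
    ∀ D ⊆ C, D.Nonempty → ∑ x ∈ D, x = 0 → D = C
/-- rank: maximum size of a linearly independent subset of `M`. -/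
noncomputable def rk {n : ℕ} (M : Finset (Fin n → ZMod 2)) : ℕ :=
  sSup {k : ℕ | ∃ s ⊆ M, s.card = k ∧
    LinearIndependent (ZMod 2) (fun x : s => (x : Fin n → ZMod 2))}

private lemma add_self_zero' {n : ℕ} (x : Fin n → ZMod 2) : x + x = 0 := by
  funext i
  show x i + x i = 0
  have : ∀ a : ZMod 2, a + a = 0 := by decide
  exact this _

/-- A nonempty subset of a linearly independent finset cannot have zero sum. -/
private lemma no_zero_sum' {n : ℕ} {B D : Finset (Fin n → ZMod 2)}
    (hind : LinearIndependent (ZMod 2) (fun x : B => (x : Fin n → ZMod 2)))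
    (hDB : D ⊆ B) (hsum : ∑ x ∈ D, x = 0) : D = ∅ := by
  classical
  rw [Fintype.linearIndependent_iff] at hind
  have h := hind (fun i => if (i : Fin n → ZMod 2) ∈ D then 1 else 0) ?_
  · rw [Finset.eq_empty_iff_forall_notMem]
    intro v hv
    have := h ⟨v, hDB hv⟩
    simp [hv] at this
  · calc ∑ i : B, (if (i : Fin n → ZMod 2) ∈ D then (1 : ZMod 2) else 0) • (i : Fin n → ZMod 2)
        = ∑ v ∈ B, (if v ∈ D then (1 : ZMod 2) else 0) • v :=
          Finset.sum_coe_sort B (fun v => (if v ∈ D then (1 : ZMod 2) else 0) • v)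
      _ = ∑ v ∈ B, (if v ∈ D then v else 0) := by
          refine Finset.sum_congr rfl fun v _ => ?_; split <;> simp
      _ = ∑ v ∈ B ∩ D, v := Finset.sum_ite_mem _ _ _
      _ = ∑ v ∈ D, v := by rw [Finset.inter_eq_right.2 hDB]
      _ = 0 := hsum

/-- If `M` contains no circuit of size larger than `c`, then
`|M| ≤ ∑_{i=1}^{c-1} C(rank M, i)`. -/
theorem card_le_of_no_large_circuit {n : ℕ} (M : Finset (Fin n → ZMod 2))
    (hM : (0 : Fin n → ZMod 2) ∉ M) (c : ℕ) (hc : 2 ≤ c)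
    (hno : ∀ C ⊆ M, IsCircuit C → C.card ≤ c) :
    M.card ≤ ∑ i ∈ Finset.Icc 1 (c - 1), (rk M).choose i := by
  classical
  set S : Set ℕ := {k : ℕ | ∃ s ⊆ M, s.card = k ∧
    LinearIndependent (ZMod 2) (fun x : s => (x : (Fin n → ZMod 2)))} with hS
  have hrk : rk M = sSup S := rfl
  have hbdd : BddAbove S := ⟨M.card, fun k hk => by
    obtain ⟨s, hs, hcard, -⟩ := hk; exact hcard ▸ Finset.card_le_card hs⟩
  have hne : S.Nonempty := ⟨0, ∅, Finset.empty_subset _, Finset.card_empty,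
    linearIndependent_empty_type⟩
  have hrS : rk M ∈ S := hrk ▸ Nat.sSup_mem hne hbdd
  obtain ⟨B, hBM, hBcard, hBind⟩ := hrS
  -- every element of M lies in the span of B
  have hspan : ∀ x ∈ M, x ∈ Submodule.span (ZMod 2) (B : Set (Fin n → ZMod 2)) := by
    intro x hx
    by_contra h
    have hxB : x ∉ B := fun hxB => h (Submodule.subset_span hxB)
    have hBind' : LinearIndependent (ZMod 2) (fun b : ((B : Set (Fin n → ZMod 2)) : Type _) => (b : (Fin n → ZMod 2))) := hBind
    have hins : LinearIndependent (ZMod 2)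
        (fun b : (((insert x B : Finset (Fin n → ZMod 2)) : Set (Fin n → ZMod 2)) : Type _) => (b : (Fin n → ZMod 2))) := by
      rw [Finset.coe_insert]
      exact LinearIndepOn.id_insert hBind' h
    have hmem : rk M + 1 ∈ S := ⟨insert x B, Finset.insert_subset hx hBM,
      by rw [Finset.card_insert_of_notMem hxB, hBcard], hins⟩
    have := le_csSup hbdd hmem
    rw [← hrk] at this
    omega
  -- choose a subset representation for each element of M
  have h01 : ∀ a : ZMod 2, a = 0 ∨ a = 1 := by decide
  have hrep : ∀ x : (Fin n → ZMod 2), ∃ T : Finset (Fin n → ZMod 2), x ∈ M → T ⊆ B ∧ ∑ v ∈ T, v = x := by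
    intro x
    by_cases hx : x ∈ M
    · obtain ⟨f, -, hf⟩ := Submodule.mem_span_finset.1 (hspan x hx)
      refine ⟨B.filter (fun v => f v = 1), fun _ => ⟨Finset.filter_subset _ _, ?_⟩⟩
      calc ∑ v ∈ B.filter (fun v => f v = 1), v
          = ∑ v ∈ B, if f v = 1 then v else 0 := Finset.sum_filter _ _
        _ = ∑ v ∈ B, f v • v := by
            refine Finset.sum_congr rfl fun v _ => ?_
            rcases h01 (f v) with h | h <;> simp [h]
        _ = x := hf
    · exact ⟨∅, fun h => absurd h hx⟩
  choose T hT using hrep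
  have hTB : ∀ x ∈ M, T x ⊆ B := fun x hx => (hT x hx).1
  have hTsum : ∀ x ∈ M, ∑ v ∈ T x, v = x := fun x hx => (hT x hx).2
  -- each T x is nonempty
  have hTne : ∀ x ∈ M, (T x).Nonempty := by
    intro x hx
    rw [Finset.nonempty_iff_ne_empty]
    intro h
    apply hM
    have := hTsum x hx
    rw [h] at this
    simp at this
    rwa [this]
  -- each T x has at most c - 1 elements
  have hTcard : ∀ x ∈ M, (T x).card ≤ c - 1 := by
    intro x hx
    by_cases hxT : x ∈ T x
    · -- then T x = {x}
      have hsub : {x} ⊆ T x := Finset.singleton_subset_iff.2 hxT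
      have h0 : ∑ v ∈ T x \ {x}, v = 0 := by
        rw [Finset.sum_sdiff_eq_sub hsub, hTsum x hx, Finset.sum_singleton, sub_self]
      have hemp := no_zero_sum' hBind ((Finset.sdiff_subset).trans (hTB x hx)) h0
      have : T x = {x} := Finset.Subset.antisymm
        (Finset.sdiff_eq_empty_iff_subset.1 hemp) hsub
      rw [this, Finset.card_singleton]
      omega
    · set D := insert x (T x) with hD
      have hDM : D ⊆ M := Finset.insert_subset hx ((hTB x hx).trans hBM)
      have hDsum : ∑ v ∈ D, v = 0 := by
        rw [hD, Finset.sum_insert hxT, hTsum x hx]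
        exact add_self_zero' x
      have hcirc : IsCircuit D := by
        refine ⟨⟨x, Finset.mem_insert_self _ _⟩, fun h0 => hM (hDM h0), hDsum, ?_⟩
        intro E hE hEne hEsum
        by_cases hxE : x ∈ E
        · have h1 : ∑ v ∈ D \ E, v = 0 := by
            rw [Finset.sum_sdiff_eq_sub hE, hDsum, hEsum, sub_zero]
          have h2 : D \ E ⊆ B := by
            intro v hv
            rw [Finset.mem_sdiff] at hv
            rcases Finset.mem_insert.1 hv.1 with rfl | hvT
            · exact absurd hxE hv.2
            · exact hTB x hx hvT
          have := no_zero_sum' hBind h2 h1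
          exact Finset.Subset.antisymm hE (Finset.sdiff_eq_empty_iff_subset.1 this)
        · have hEB : E ⊆ B := by
            intro v hv
            rcases Finset.mem_insert.1 (hE hv) with rfl | hvT
            · exact absurd hv hxE
            · exact hTB x hx hvT
          have := no_zero_sum' hBind hEB hEsum
          rw [this] at hEne
          exact absurd hEne Finset.not_nonempty_empty
      have hle := hno D hDM hcirc
      rw [hD, Finset.card_insert_of_notMem hxT] at hle
      omega
  -- counting
  set N : Finset (Finset (Fin n → ZMod 2)) := (Finset.Icc 1 (c - 1)).biUnion (fun i => B.powersetCard i) with hN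
  have hinj : M.card ≤ N.card := by
    apply Finset.card_le_card_of_injOn T
    · intro x hx
      rw [hN, Finset.mem_coe, Finset.mem_biUnion]
      refine ⟨(T x).card, Finset.mem_Icc.2 ⟨Finset.card_pos.2 (hTne x hx), hTcard x hx⟩,
        Finset.mem_powersetCard.2 ⟨hTB x hx, rfl⟩⟩
    · intro x hx y hy hxy
      rw [← hTsum x hx, ← hTsum y hy, hxy]
  calc M.card ≤ N.card := hinj
    _ ≤ ∑ i ∈ Finset.Icc 1 (c - 1), (B.powersetCard i).card := Finset.card_biUnion_le
    _ = ∑ i ∈ Finset.Icc 1 (c - 1), (rk M).choose i := by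
        refine Finset.sum_congr rfl fun i _ => ?_
        rw [Finset.card_powersetCard, hBcard]
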